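/- Truncation error bound for the derivative series (Lemma A.4 of the paper, derivative part): In the TMA(1) setup, define D_t(θ) = -σ^{-1} Σ_{j=1}^∞ Σ_{k=1}^{j} ( ∏_{i=1, i≠k}^{j} A_{t−i}(θ) ) X_{t−j} and its truncated version D̃_t(θ) = -σ^{-1} Σ_{j=1}^{t−1} Σ_{k=1}^{j} ( ∏_{i=1, i≠k}^{j} A_{t−i}(θ) ) X_{t−j} for t ≥ 1. Then almost surely the random variables K₀ = Σ_{k=0}^∞ c₁^k |X_{−k}| and K₁ = Σ_{k=0}^∞ k c₁^k |X_{−k}| are finite and for every integer t ≥ 1 and every θ ∈ Θ, |D̃_t(θ) − D_t(θ)| ≤ c₂^{-1/2} c₁^{t−1} ( K₁ + t K₀ ). -/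

import Mathlib

open MeasureTheory ProbabilityTheory

/-- TMA(1) parameter space `Θ = {(φ, ξ, σ²) : |φ| ≤ c₁, |φ+ξ| ≤ c₁, c₂ ≤ σ² ≤ c₃}`. -/
def tmaTheta (c₁ c₂ c₃ : ℝ) : Set (ℝ × ℝ × ℝ) :=
  {θ | |θ.1| ≤ c₁ ∧ |θ.1 + θ.2.1| ≤ c₁ ∧ c₂ ≤ θ.2.2 ∧ θ.2.2 ≤ c₃}

/-- Inversion coefficient `A_t(θ) = -(φ + ξ·1{X_t ≤ u})`. -/
noncomputable def tmaA {Ω : Type*} (X : ℤ → Ω → ℝ) (u : ℝ) (θ : ℝ × ℝ × ℝ)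
    (t : ℤ) (ω : Ω) : ℝ :=
  -(θ.1 + θ.2.1 * (if X t ω ≤ u then 1 else 0))

/-- Inverted error `ε_t(θ) = σ⁻¹(X_t + Σ_{j≥1} (∏_{i=1}^j A_{t−i}(θ)) X_{t−j})`, written as
`σ⁻¹ Σ_{j≥0} (∏_{i=1}^j A_{t−i}(θ)) X_{t−j}` (the `j = 0` term is `X_t`), `σ = √(σ²)`. -/
noncomputable def tmaEps {Ω : Type*} (X : ℤ → Ω → ℝ) (u : ℝ) (θ : ℝ × ℝ × ℝ)
    (t : ℤ) (ω : Ω) : ℝ :=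
  (Real.sqrt θ.2.2)⁻¹ *
    ∑' j : ℕ, (∏ i ∈ Finset.Icc 1 j, tmaA X u θ (t - (i : ℤ)) ω) * X (t - j) ω

/-- Derivative series `D_t(θ) = -σ⁻¹ Σ_{j≥1} Σ_{k=1}^j (∏_{i=1,i≠k}^j A_{t−i}(θ)) X_{t−j}`. -/
noncomputable def tmaD {Ω : Type*} (X : ℤ → Ω → ℝ) (u : ℝ) (θ : ℝ × ℝ × ℝ)
    (t : ℤ) (ω : Ω) : ℝ :=
  -(Real.sqrt θ.2.2)⁻¹ *
    ∑' j : ℕ, ∑ k ∈ Finset.Icc 1 j,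
      (∏ i ∈ (Finset.Icc 1 j).erase k, tmaA X u θ (t - (i : ℤ)) ω) * X (t - j) ω

/-- Truncated derivative series
`D̃_t(θ) = -σ⁻¹ Σ_{j=1}^{t−1} Σ_{k=1}^j (∏_{i=1,i≠k}^j A_{t−i}(θ)) X_{t−j}`. -/
noncomputable def tmaDT {Ω : Type*} (X : ℤ → Ω → ℝ) (u : ℝ) (θ : ℝ × ℝ × ℝ)
    (t : ℕ) (ω : Ω) : ℝ :=
  -(Real.sqrt θ.2.2)⁻¹ *
    ∑ j ∈ Finset.range t, ∑ k ∈ Finset.Icc 1 j,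
      (∏ i ∈ (Finset.Icc 1 j).erase k, tmaA X u θ ((t : ℤ) - (i : ℤ)) ω) *
        X ((t : ℤ) - (j : ℤ)) ω

open scoped ENNReal NNReal

lemma Real.ennnorm_eq_ofReal_abs (r : ℝ) : (‖r‖₊ : ℝ≥0∞) = ENNReal.ofReal |r| :=
  Real.enorm_eq_ofReal_abs r

lemma tmaA_abs_le {Ω : Type*} (X : ℤ → Ω → ℝ) (u : ℝ) {c₁ c₂ c₃ : ℝ} {θ : ℝ × ℝ × ℝ}
    (hθ : θ ∈ tmaTheta c₁ c₂ c₃) (s : ℤ) (ω : Ω) : |tmaA X u θ s ω| ≤ c₁ := by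
  obtain ⟨h1, h2, -⟩ := hθ
  rw [tmaA, abs_neg]
  split_ifs with h
  · simpa using h2
  · simpa using h1

lemma sum_prod_bound {a : ℕ → ℝ} {c₁ : ℝ} (hc : 0 ≤ c₁) (ha : ∀ i, |a i| ≤ c₁) (j : ℕ) :
    |∑ k ∈ Finset.Icc 1 j, ∏ i ∈ (Finset.Icc 1 j).erase k, a i| ≤ (j : ℝ) * c₁ ^ (j - 1) := by
  calc |∑ k ∈ Finset.Icc 1 j, ∏ i ∈ (Finset.Icc 1 j).erase k, a i|
      ≤ ∑ k ∈ Finset.Icc 1 j, |∏ i ∈ (Finset.Icc 1 j).erase k, a i| :=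
        Finset.abs_sum_le_sum_abs _ _
    _ ≤ ∑ _k ∈ Finset.Icc 1 j, c₁ ^ (j - 1) := by
        refine Finset.sum_le_sum fun k hk => ?_
        rw [Finset.abs_prod]
        calc ∏ i ∈ (Finset.Icc 1 j).erase k, |a i|
            ≤ ∏ _i ∈ (Finset.Icc 1 j).erase k, c₁ :=
              Finset.prod_le_prod (fun i _ => abs_nonneg _) (fun i _ => ha i)
          _ = c₁ ^ ((Finset.Icc 1 j).erase k).card := Finset.prod_const c₁
          _ = c₁ ^ (j - 1) := by rw [Finset.card_erase_of_mem hk, Nat.card_Icc, Nat.add_sub_cancel]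
    _ = (j : ℝ) * c₁ ^ (j - 1) := by
        rw [Finset.sum_const, Nat.card_Icc, nsmul_eq_mul]
        norm_num

lemma det_bound {Ω : Type*} (X : ℤ → Ω → ℝ) (u : ℝ) {c₁ c₂ c₃ : ℝ}
    (hc₁ : 0 < c₁) (hc₂ : 0 < c₂) (ω : Ω)
    (hK0 : Summable fun k : ℕ => c₁ ^ k * |X (-(k : ℤ)) ω|)
    (hK1 : Summable fun k : ℕ => (k : ℝ) * c₁ ^ k * |X (-(k : ℤ)) ω|)
    (t : ℕ) (ht : 1 ≤ t) {θ : ℝ × ℝ × ℝ} (hθ : θ ∈ tmaTheta c₁ c₂ c₃) :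
    |tmaDT X u θ t ω - tmaD X u θ (t : ℤ) ω|
      ≤ (Real.sqrt c₂)⁻¹ * c₁ ^ (t - 1) *
        ((∑' k : ℕ, (k : ℝ) * c₁ ^ k * |X (-(k : ℤ)) ω|)
          + (t : ℝ) * ∑' k : ℕ, c₁ ^ k * |X (-(k : ℤ)) ω|) := by
  set f : ℕ → ℝ := fun j => ∑ k ∈ Finset.Icc 1 j,
      (∏ i ∈ (Finset.Icc 1 j).erase k, tmaA X u θ ((t : ℤ) - (i : ℤ)) ω) *
        X ((t : ℤ) - (j : ℤ)) ω with hf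
  have hS : ∀ j : ℕ, |f j| ≤ (j : ℝ) * c₁ ^ (j - 1) * |X ((t : ℤ) - (j : ℤ)) ω| := by
    intro j
    rw [hf]
    simp only [← Finset.sum_mul, abs_mul]
    exact mul_le_mul_of_nonneg_right
      (sum_prod_bound hc₁.le (fun i => tmaA_abs_le X u hθ _ ω) j) (abs_nonneg _)
  have key : ∀ j : ℕ, |f (j + t)| ≤ c₁ ^ (t - 1) *
      ((j : ℝ) * c₁ ^ j * |X (-(j : ℤ)) ω| + (t : ℝ) * (c₁ ^ j * |X (-(j : ℤ)) ω|)) := by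
    intro j
    have h1 := hS (j + t)
    have hx : ((t : ℤ) - ((j + t : ℕ) : ℤ)) = -(j : ℤ) := by push_cast; ring
    rw [hx] at h1
    refine h1.trans (le_of_eq ?_)
    have hpow : c₁ ^ ((j + t) - 1) = c₁ ^ j * c₁ ^ (t - 1) := by
      rw [← pow_add]; congr 1; omega
    rw [hpow]
    push_cast
    ring
  have hg : Summable (fun j : ℕ => c₁ ^ (t - 1) *
      ((j : ℝ) * c₁ ^ j * |X (-(j : ℤ)) ω| + (t : ℝ) * (c₁ ^ j * |X (-(j : ℤ)) ω|))) :=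
    (hK1.add (hK0.mul_left _)).mul_left _
  have hsum : Summable f :=
    (summable_nat_add_iff t).mp
      (Summable.of_norm_bounded hg (fun j => by rw [Real.norm_eq_abs]; exact key j))
  have hsplit : tmaDT X u θ t ω - tmaD X u θ (t : ℤ) ω
      = (Real.sqrt θ.2.2)⁻¹ * ∑' j : ℕ, f (j + t) := by
    have h := Summable.sum_add_tsum_nat_add t hsum
    rw [tmaDT, tmaD, ← hf]
    rw [← h]
    ring
  have habs : |tmaDT X u θ t ω - tmaD X u θ (t : ℤ) ω|
      = (Real.sqrt θ.2.2)⁻¹ * |∑' j : ℕ, f (j + t)| := by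
    rw [hsplit, abs_mul, abs_of_nonneg (inv_nonneg.2 (Real.sqrt_nonneg _))]
  have htail : |∑' j : ℕ, f (j + t)| ≤ c₁ ^ (t - 1) *
      ((∑' k : ℕ, (k : ℝ) * c₁ ^ k * |X (-(k : ℤ)) ω|)
        + (t : ℝ) * ∑' k : ℕ, c₁ ^ k * |X (-(k : ℤ)) ω|) := by
    have hb := tsum_of_norm_bounded hg.hasSum (fun j => by rw [Real.norm_eq_abs]; exact key j)
    rw [Real.norm_eq_abs] at hb
    refine hb.trans (le_of_eq ?_)
    rw [tsum_mul_left, Summable.tsum_add hK1 (hK0.mul_left _), tsum_mul_left]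
  have hσ : (Real.sqrt θ.2.2)⁻¹ ≤ (Real.sqrt c₂)⁻¹ := by
    have h1 : Real.sqrt c₂ ≤ Real.sqrt θ.2.2 := Real.sqrt_le_sqrt hθ.2.2.1
    exact inv_anti₀ (Real.sqrt_pos.2 hc₂) h1
  rw [habs]
  calc (Real.sqrt θ.2.2)⁻¹ * |∑' j : ℕ, f (j + t)|
      ≤ (Real.sqrt c₂)⁻¹ * (c₁ ^ (t - 1) *
        ((∑' k : ℕ, (k : ℝ) * c₁ ^ k * |X (-(k : ℤ)) ω|)
          + (t : ℝ) * ∑' k : ℕ, c₁ ^ k * |X (-(k : ℤ)) ω|)) :=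
        mul_le_mul hσ htail (abs_nonneg _) (inv_nonneg.2 (Real.sqrt_nonneg _))
    _ = _ := by ring


/-- Lemma A.4, derivative part (truncation error bound for the derivative series):
almost surely `K₀ = Σ_k c₁^k |X_{−k}|` and `K₁ = Σ_k k c₁^k |X_{−k}|` are finite and for
every `t ≥ 1` and `θ ∈ Θ`, `|D̃_t(θ) − D_t(θ)| ≤ c₂^{-1/2} c₁^{t−1} (K₁ + t K₀)`. -/
theorem stmt8 {Ω : Type*} [MeasurableSpace Ω] (P : Measure Ω) [IsProbabilityMeasure P]
    (u c₁ c₂ c₃ : ℝ) (hc₁ : 0 < c₁) (hc₁' : c₁ < 1) (hc₂ : 0 < c₂) (hc₂₃ : c₂ ≤ c₃)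
    (φ₀ ξ₀ s₀ : ℝ) (hθ₀ : (φ₀, ξ₀, s₀) ∈ tmaTheta c₁ c₂ c₃)
    (e X : ℤ → Ω → ℝ) (he : ∀ t, Measurable (e t)) (hX : ∀ t, Measurable (X t))
    (heG : ∀ t, P.map (e t) = gaussianReal 0 1)
    (hmodel : ∀ᵐ ω ∂P, ∀ t : ℤ, X t ω =
      (φ₀ + ξ₀ * (if X (t - 1) ω ≤ u then 1 else 0)) * Real.sqrt s₀ * e (t - 1) ω
        + Real.sqrt s₀ * e t ω) :
    ∀ᵐ ω ∂P,
      Summable (fun k : ℕ => c₁ ^ k * |X (-(k : ℤ)) ω|) ∧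
      Summable (fun k : ℕ => (k : ℝ) * c₁ ^ k * |X (-(k : ℤ)) ω|) ∧
      ∀ t : ℕ, 1 ≤ t → ∀ θ ∈ tmaTheta c₁ c₂ c₃,
        |tmaDT X u θ t ω - tmaD X u θ (t : ℤ) ω|
          ≤ (Real.sqrt c₂)⁻¹ * c₁ ^ (t - 1) *
            ((∑' k : ℕ, (k : ℝ) * c₁ ^ k * |X (-(k : ℤ)) ω|)
              + (t : ℝ) * ∑' k : ℕ, c₁ ^ k * |X (-(k : ℤ)) ω|) := by
  obtain ⟨hφ, hφξ, hs₂, hs₃⟩ := hθ₀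
  simp only at hφ hφξ hs₂ hs₃
  -- finite first absolute moment of the standard Gaussian
  have hM : ∫⁻ x, (‖x‖₊ : ℝ≥0∞) ∂(gaussianReal 0 1) < ⊤ := by
    rw [gaussianReal_of_var_ne_zero 0 one_ne_zero,
      lintegral_withDensity_eq_lintegral_mul _ (measurable_gaussianPDF 0 1)
        measurable_nnnorm.coe_nnreal_ennreal]
    have hInt : Integrable (fun x : ℝ => x * Real.exp (-(2⁻¹ : ℝ) * x ^ 2)) := by
      have h := integrable_rpow_mul_exp_neg_mul_sq (b := (2⁻¹ : ℝ)) (by norm_num)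
        (s := 1) (by norm_num)
      simpa [Real.rpow_one] using h
    refine lt_of_le_of_lt (lintegral_mono fun x => ?_) hInt.abs.hasFiniteIntegral
    rw [Pi.mul_apply, gaussianPDF, Real.ennnorm_eq_ofReal_abs,
      Real.enorm_eq_ofReal_abs, ← ENNReal.ofReal_mul (gaussianPDFReal_nonneg _ _ _)]
    refine ENNReal.ofReal_le_ofReal ?_
    rw [gaussianPDFReal]
    simp only [abs_abs, abs_mul, abs_of_pos (Real.exp_pos _)]
    have h2π : 1 ≤ Real.sqrt (2 * Real.pi * ((1 : ℝ≥0) : ℝ)) := by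
      rw [NNReal.coe_one, mul_one, show (1 : ℝ) = Real.sqrt 1 from Real.sqrt_one.symm]
      exact Real.sqrt_le_sqrt (by nlinarith [Real.pi_gt_three])
    have hexp : Real.exp (-(x - 0) ^ 2 / (2 * ((1 : ℝ≥0) : ℝ)))
        = Real.exp (-(2⁻¹ : ℝ) * x ^ 2) := by
      rw [NNReal.coe_one]; ring_nf
    rw [hexp, mul_comm |x|]
    have hinv : (Real.sqrt (2 * Real.pi * ((1 : ℝ≥0) : ℝ)))⁻¹ ≤ 1 := by
      rw [inv_le_one_iff₀]; right; exact h2π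
    nlinarith [Real.exp_pos (-(2⁻¹ : ℝ) * x ^ 2), abs_nonneg x,
      mul_nonneg (Real.exp_pos (-(2⁻¹ : ℝ) * x ^ 2)).le (abs_nonneg x)]
  set M : ℝ≥0∞ := ∫⁻ x, (‖x‖₊ : ℝ≥0∞) ∂(gaussianReal 0 1) with hMdef
  have hMe : ∀ s : ℤ, ∫⁻ ω, (‖e s ω‖₊ : ℝ≥0∞) ∂P = M := by
    intro s
    rw [hMdef, ← heG s, lintegral_map measurable_nnnorm.coe_nnreal_ennreal (he s)]
  -- a.e. pointwise bound on |X t|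
  have hXbound : ∀ᵐ ω ∂P, ∀ t : ℤ, |X t ω| ≤ Real.sqrt c₃ * (|e (t - 1) ω| + |e t ω|) := by
    filter_upwards [hmodel] with ω hω t
    have h := hω t
    set b : ℝ := φ₀ + ξ₀ * (if X (t - 1) ω ≤ u then 1 else 0) with hb
    have hb1 : |b| ≤ 1 := by
      have hbc : |b| ≤ c₁ := by
        rw [hb]; split_ifs
        · simpa using hφξ
        · simpa using hφ
      linarith
    have hs : Real.sqrt s₀ ≤ Real.sqrt c₃ := Real.sqrt_le_sqrt hs₃
    have hs0 : (0 : ℝ) ≤ Real.sqrt s₀ := Real.sqrt_nonneg _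
    rw [h]
    have habs := abs_add_le (b * Real.sqrt s₀ * e (t - 1) ω) (Real.sqrt s₀ * e t ω)
    rw [abs_mul, abs_mul, abs_mul, abs_of_nonneg hs0] at habs
    have hbs : |b| * Real.sqrt s₀ ≤ Real.sqrt c₃ := by
      calc |b| * Real.sqrt s₀ ≤ 1 * Real.sqrt c₃ := mul_le_mul hb1 hs hs0 zero_le_one
        _ = Real.sqrt c₃ := one_mul _
    have h1 : |b| * Real.sqrt s₀ * |e (t - 1) ω| ≤ Real.sqrt c₃ * |e (t - 1) ω| :=
      mul_le_mul_of_nonneg_right hbs (abs_nonneg _)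
    have h2 : Real.sqrt s₀ * |e t ω| ≤ Real.sqrt c₃ * |e t ω| :=
      mul_le_mul_of_nonneg_right hs (abs_nonneg _)
    calc |b * Real.sqrt s₀ * e (t - 1) ω + Real.sqrt s₀ * e t ω|
        ≤ |b| * Real.sqrt s₀ * |e (t - 1) ω| + Real.sqrt s₀ * |e t ω| := habs
      _ ≤ Real.sqrt c₃ * |e (t - 1) ω| + Real.sqrt c₃ * |e t ω| := by linarith
      _ = Real.sqrt c₃ * (|e (t - 1) ω| + |e t ω|) := by ring
  -- uniform bound on the first moment of |X s|
  set C : ℝ≥0∞ := ENNReal.ofReal (Real.sqrt c₃) * (M + M) with hCdef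
  have hC : C < ⊤ :=
    ENNReal.mul_lt_top ENNReal.ofReal_lt_top (ENNReal.add_lt_top.2 ⟨hM, hM⟩)
  have hCX : ∀ s : ℤ, ∫⁻ ω, (‖X s ω‖₊ : ℝ≥0∞) ∂P ≤ C := by
    intro s
    calc ∫⁻ ω, (‖X s ω‖₊ : ℝ≥0∞) ∂P
        ≤ ∫⁻ ω, ENNReal.ofReal (Real.sqrt c₃) *
            ((‖e (s - 1) ω‖₊ : ℝ≥0∞) + (‖e s ω‖₊ : ℝ≥0∞)) ∂P := by
          refine lintegral_mono_ae ?_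
          filter_upwards [hXbound] with ω hω
          rw [Real.ennnorm_eq_ofReal_abs, Real.ennnorm_eq_ofReal_abs,
            Real.ennnorm_eq_ofReal_abs,
            ← ENNReal.ofReal_add (abs_nonneg _) (abs_nonneg _),
            ← ENNReal.ofReal_mul (Real.sqrt_nonneg _)]
          exact ENNReal.ofReal_le_ofReal (hω s)
      _ = C := by
          rw [lintegral_const_mul (f := fun ω => (‖e (s - 1) ω‖₊ : ℝ≥0∞) + ‖e s ω‖₊) _ ((he (s - 1)).nnnorm.coe_nnreal_ennreal.add
            (he s).nnnorm.coe_nnreal_ennreal),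
            lintegral_add_left (he (s - 1)).nnnorm.coe_nnreal_ennreal, hMe, hMe, hCdef]
  -- a.s. summability of the dominating series
  have hsum_ae : ∀ᵐ ω ∂P, Summable (fun k : ℕ => ((k : ℝ) + 1) * c₁ ^ k * |X (-(k : ℤ)) ω|) := by
    set g : ℕ → ℝ := fun k => ((k : ℝ) + 1) * c₁ ^ k with hgdef
    have hgpos : ∀ k, 0 ≤ g k := fun k => by positivity
    have hgsum : Summable g := by
      have h1 := summable_pow_mul_geometric_of_norm_lt_one (R := ℝ) 1
        (r := c₁) (by rw [Real.norm_eq_abs, abs_of_pos hc₁]; exact hc₁')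
      have h2 : Summable (fun n : ℕ => c₁ ^ n) := summable_geometric_of_lt_one hc₁.le hc₁'
      exact (h1.add h2).congr fun n => by rw [hgdef]; push_cast; ring
    have hmeasF : ∀ k : ℕ, Measurable fun ω => ENNReal.ofReal (g k * |X (-(k : ℤ)) ω|) :=
      fun k => ((hX _).abs.const_mul _).ennreal_ofReal
    have hlin : ∫⁻ ω, ∑' k, ENNReal.ofReal (g k * |X (-(k : ℤ)) ω|) ∂P < ⊤ := by
      rw [lintegral_tsum (fun k => (hmeasF k).aemeasurable)]
      calc ∑' k, ∫⁻ ω, ENNReal.ofReal (g k * |X (-(k : ℤ)) ω|) ∂P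
          ≤ ∑' k, ENNReal.ofReal (g k) * C := by
            refine ENNReal.tsum_le_tsum fun k => ?_
            simp_rw [ENNReal.ofReal_mul (hgpos k)]
            rw [lintegral_const_mul _ (hX _).abs.ennreal_ofReal]
            refine mul_le_mul_right ?_ _
            simp_rw [← Real.ennnorm_eq_ofReal_abs]
            exact hCX _
        _ = (∑' k, ENNReal.ofReal (g k)) * C := ENNReal.tsum_mul_right
        _ < ⊤ := by
            rw [← ENNReal.ofReal_tsum_of_nonneg hgpos hgsum]
            exact ENNReal.mul_lt_top ENNReal.ofReal_lt_top hC
    have hae := ae_lt_top (Measurable.ennreal_tsum hmeasF) hlin.ne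
    filter_upwards [hae] with ω hω
    have hsumE := ENNReal.summable_toReal hω.ne
    refine hsumE.congr fun k => ?_
    rw [ENNReal.toReal_ofReal (by positivity)]
  filter_upwards [hsum_ae] with ω hω
  have hK0 : Summable (fun k : ℕ => c₁ ^ k * |X (-(k : ℤ)) ω|) := by
    refine Summable.of_nonneg_of_le (fun k => by positivity) (fun k => ?_) hω
    have h1 : (0 : ℝ) ≤ (k : ℝ) := Nat.cast_nonneg k
    nlinarith [pow_nonneg hc₁.le k, abs_nonneg (X (-(k : ℤ)) ω),
      mul_nonneg (pow_nonneg hc₁.le k) (abs_nonneg (X (-(k : ℤ)) ω))]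
  have hK1 : Summable (fun k : ℕ => (k : ℝ) * c₁ ^ k * |X (-(k : ℤ)) ω|) := by
    refine Summable.of_nonneg_of_le (fun k => by positivity) (fun k => ?_) hω
    have h1 : (0 : ℝ) ≤ (k : ℝ) := Nat.cast_nonneg k
    nlinarith [mul_nonneg (pow_nonneg hc₁.le k) (abs_nonneg (X (-(k : ℤ)) ω))]
  exact ⟨hK0, hK1, fun t ht θ hθ => det_bound X u hc₁ hc₂ ω hK0 hK1 t ht hθ⟩
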